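/- Let R be an R-matrix on V⊗V, V = ℂ^N, let A be an associative unital ℂ-algebra, let x₁,…,x_N ∈ A, let L ∈ Mat_N(A), and let η ∈ ℂ∖{0}. Assume the operator-function permutation relation R₁L₁R₁x₁ = η·x₁L₂ holds, i.e., componentwise Σ_{a,b,c,d} R_{i₁i₂}^{ab} L_a^c R_{cb}^{dl} x_d = η·x_{i₁} L_{i₂}^l for all i₁,i₂,l. Then for every p ≥ 1 the iterated relation holds: for all indices i₁,…,i_p, j, l, Σ_{k₁,…,k_p} [R_{p→1} L₁ R_{1→p}]_{(i₁,…,i_p,j)}^{(k₁,…,k_p,l)} · x_{k₁}x_{k₂}⋯x_{k_p} = η^p · x_{i₁}x_{i₂}⋯x_{i_p} · L_j^l, where R_{1→p} = R₁R₂⋯R_p and R_{p→1} = R_pR_{p−1}⋯R₁ in Mat_{N^{p+1}}(A). -/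
import Mathlib


open Matrix BigOperators

/-- `X₁ = X ⊗ id` acting on the factors 1,2 of `(ℂ^N)^{⊗3}`. -/
noncomputable def up12 {N : ℕ} (X : Matrix (Fin N × Fin N) (Fin N × Fin N) ℂ) :
    Matrix (Fin N × Fin N × Fin N) (Fin N × Fin N × Fin N) ℂ :=
  Matrix.of fun p q => X (p.1, p.2.1) (q.1, q.2.1) * (if p.2.2 = q.2.2 then 1 else 0)

/-- `X₂ = id ⊗ X` acting on the factors 2,3 of `(ℂ^N)^{⊗3}`. -/
noncomputable def up23 {N : ℕ} (X : Matrix (Fin N × Fin N) (Fin N × Fin N) ℂ) :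
    Matrix (Fin N × Fin N × Fin N) (Fin N × Fin N × Fin N) ℂ :=
  Matrix.of fun p q => (if p.1 = q.1 then 1 else 0) * X (p.2.1, p.2.2) (q.2.1, q.2.2)

/-- A matrix `X ∈ Mat_N(A)` placed in the (0-indexed) tensor factor `p`
of `V^{⊗k}`, acting as the identity elsewhere. -/
def liftV {N : ℕ} {A : Type} [Ring A] (k : ℕ) (X : Matrix (Fin N) (Fin N) A)
    (p : ℕ) : Matrix (Fin k → Fin N) (Fin k → Fin N) A :=
  Matrix.of fun v w =>
    if h : p < k then
      X (v ⟨p, h⟩) (w ⟨p, h⟩) *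
        (if ∀ j : Fin k, (j : ℕ) ≠ p → v j = w j then 1 else 0)
    else (if v = w then 1 else 0)

/-- A matrix `X ∈ Mat_{N²}(A)` placed in the (0-indexed) tensor factors
`p, p+1` of `V^{⊗k}`; this is the operator `X_{p+1}` in 1-indexed notation. -/
def lift2 {N : ℕ} {A : Type} [Ring A] (k : ℕ)
    (X : Matrix (Fin N × Fin N) (Fin N × Fin N) A) (p : ℕ) :
    Matrix (Fin k → Fin N) (Fin k → Fin N) A :=
  Matrix.of fun v w =>
    if h : p + 1 < k then
      X (v ⟨p, Nat.lt_of_succ_lt h⟩, v ⟨p + 1, h⟩)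
          (w ⟨p, Nat.lt_of_succ_lt h⟩, w ⟨p + 1, h⟩) *
        (if ∀ j : Fin k, (j : ℕ) ≠ p → (j : ℕ) ≠ p + 1 → v j = w j then 1 else 0)
    else (if v = w then 1 else 0)

/-- The ascending product `R_{1→(n+1)} = R₁R₂⋯R_{n+1}` in `Mat_{N^k}(A)`
(0-indexed: `RupProd k RA n = R₁⋯R_{n+1}`). -/
def RupProd {N : ℕ} {A : Type} [Ring A] (k : ℕ)
    (RA : Matrix (Fin N × Fin N) (Fin N × Fin N) A) :
    ℕ → Matrix (Fin k → Fin N) (Fin k → Fin N) A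
  | 0 => lift2 k RA 0
  | n + 1 => RupProd k RA n * lift2 k RA (n + 1)

/-- The descending product `R_{(n+1)→1} = R_{n+1}R_n⋯R₁` in `Mat_{N^k}(A)`. -/
def RdownProd {N : ℕ} {A : Type} [Ring A] (k : ℕ)
    (RA : Matrix (Fin N × Fin N) (Fin N × Fin N) A) :
    ℕ → Matrix (Fin k → Fin N) (Fin k → Fin N) A
  | 0 => lift2 k RA 0
  | n + 1 => lift2 k RA (n + 1) * RdownProd k RA n

section aux
variable {N : ℕ} {A : Type} [Ring A]

def extM (k : ℕ) (M : Matrix (Fin k → Fin N) (Fin k → Fin N) A) :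
    Matrix (Fin (k+1) → Fin N) (Fin (k+1) → Fin N) A :=
  Matrix.of fun v w => M (Fin.init v) (Fin.init w) *
    (if v (Fin.last k) = w (Fin.last k) then 1 else 0)

lemma extM_apply_snoc {k : ℕ} (M : Matrix (Fin k → Fin N) (Fin k → Fin N) A)
    (v w : Fin k → Fin N) (a b : Fin N) :
    extM k M (Fin.snoc v a) (Fin.snoc w b) = M v w * (if a = b then 1 else 0) := by
  simp only [extM, Matrix.of_apply, Fin.init_snoc, Fin.snoc_last]

def snocEquiv (N m : ℕ) : ((Fin m → Fin N) × Fin N) ≃ (Fin (m+1) → Fin N) where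
  toFun p := Fin.snoc p.1 p.2
  invFun g := (Fin.init g, g (Fin.last m))
  left_inv p := by simp [Fin.init_snoc, Fin.snoc_last]
  right_inv g := by simp [Fin.snoc_init_self]

lemma sum_snoc {β : Type*} [AddCommMonoid β] {m : ℕ} (f : (Fin (m+1) → Fin N) → β) :
    ∑ g : Fin (m+1) → Fin N, f g = ∑ g : Fin m → Fin N, ∑ d : Fin N, f (Fin.snoc g d) := by
  rw [← (snocEquiv N m).sum_comp f, Fintype.sum_prod_type]
  rfl

lemma mul_ite_ite (x : A) (P Q S : Prop) [Decidable P] [Decidable Q] [Decidable S]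
    (h : P ∧ Q ↔ S) :
    x * (if P then (1:A) else 0) * (if Q then 1 else 0) = x * (if S then 1 else 0) := by
  split_ifs with h1 h2 h3 <;> simp_all

lemma extM_mul {k : ℕ} (M M' : Matrix (Fin k → Fin N) (Fin k → Fin N) A) :
    extM k (M * M') = extM k M * extM k M' := by
  ext v w
  simp only [extM, Matrix.of_apply, Matrix.mul_apply, sum_snoc, Fin.init_snoc, Fin.snoc_last]
  simp only [mul_ite, ite_mul, mul_zero, zero_mul, mul_one, one_mul,
    Finset.sum_ite_eq, Finset.sum_ite_eq', Finset.mem_univ, if_true]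
  rw [Finset.sum_ite_irrel, Finset.sum_const_zero]

end aux

section aux2
variable {N : ℕ} {A : Type} [Ring A]

lemma extM_lift2 {k p : ℕ} (hp : p + 1 < k) (X : Matrix (Fin N × Fin N) (Fin N × Fin N) A) :
    extM k (lift2 k X p) = lift2 (k+1) X p := by
  ext v w
  have hp' : p + 1 < k + 1 := Nat.lt_succ_of_lt hp
  simp only [extM, lift2, Matrix.of_apply, dif_pos hp, dif_pos hp']
  have e1 : Fin.init v ⟨p, Nat.lt_of_succ_lt hp⟩ = v ⟨p, Nat.lt_of_succ_lt hp'⟩ := rfl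
  have e2 : Fin.init v ⟨p+1, hp⟩ = v ⟨p+1, hp'⟩ := rfl
  have e3 : Fin.init w ⟨p, Nat.lt_of_succ_lt hp⟩ = w ⟨p, Nat.lt_of_succ_lt hp'⟩ := rfl
  have e4 : Fin.init w ⟨p+1, hp⟩ = w ⟨p+1, hp'⟩ := rfl
  rw [e1, e2, e3, e4]
  refine mul_ite_ite _ _ _ _ ?_
  constructor
  · rintro ⟨h1, h2⟩ j hj1 hj2
    induction j using Fin.lastCases with
    | last => exact h2
    | cast t =>
      have := h1 t (by simpa using hj1) (by simpa using hj2)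
      simpa [Fin.init] using this
  · intro h
    refine ⟨fun t ht1 ht2 => ?_, h (Fin.last k) (by simp; omega) (by simp; omega)⟩
    have := h t.castSucc (by simpa using ht1) (by simpa using ht2)
    simpa [Fin.init] using this

lemma extM_liftV {k q : ℕ} (hq : q < k) (L : Matrix (Fin N) (Fin N) A) :
    extM k (liftV k L q) = liftV (k+1) L q := by
  ext v w
  have hq' : q < k + 1 := Nat.lt_succ_of_lt hq
  simp only [extM, liftV, Matrix.of_apply, dif_pos hq, dif_pos hq']
  have e1 : Fin.init v ⟨q, hq⟩ = v ⟨q, hq'⟩ := rfl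
  have e3 : Fin.init w ⟨q, hq⟩ = w ⟨q, hq'⟩ := rfl
  rw [e1, e3]
  refine mul_ite_ite _ _ _ _ ?_
  constructor
  · rintro ⟨h1, h2⟩ j hj1
    induction j using Fin.lastCases with
    | last => exact h2
    | cast t =>
      have := h1 t (by simpa using hj1)
      simpa [Fin.init] using this
  · intro h
    refine ⟨fun t ht1 => ?_, h (Fin.last k) (by simp; omega)⟩
    have := h t.castSucc (by simpa using ht1)
    simpa [Fin.init] using this

lemma extM_RdownProd {k n : ℕ} (hn : n + 1 < k)
    (RA : Matrix (Fin N × Fin N) (Fin N × Fin N) A) :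
    extM k (RdownProd k RA n) = RdownProd (k+1) RA n := by
  induction n with
  | zero => exact extM_lift2 hn RA
  | succ n ih =>
    show extM k (lift2 k RA (n+1) * RdownProd k RA n) = lift2 (k+1) RA (n+1) * RdownProd (k+1) RA n
    rw [extM_mul, extM_lift2 hn, ih (Nat.lt_of_succ_lt hn)]

lemma extM_RupProd {k n : ℕ} (hn : n + 1 < k)
    (RA : Matrix (Fin N × Fin N) (Fin N × Fin N) A) :
    extM k (RupProd k RA n) = RupProd (k+1) RA n := by
  induction n with
  | zero => exact extM_lift2 hn RA
  | succ n ih =>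
    show extM k (RupProd k RA n * lift2 k RA (n+1)) = RupProd (k+1) RA n * lift2 (k+1) RA (n+1)
    rw [extM_mul, extM_lift2 hn, ih (Nat.lt_of_succ_lt hn)]

end aux2

section aux3
variable {N : ℕ} {A : Type} [Ring A]

lemma lift2_last_apply {m : ℕ} (X : Matrix (Fin N × Fin N) (Fin N × Fin N) A)
    (v w : Fin m → Fin N) (a b c d : Fin N) :
    lift2 (m+2) X m (Fin.snoc (Fin.snoc v a) b) (Fin.snoc (Fin.snoc w c) d)
      = X (a, b) (c, d) * (if v = w then 1 else 0) := by
  have hm : m + 1 < m + 2 := by omega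
  simp only [lift2, Matrix.of_apply, dif_pos hm]
  have e0 : (⟨m+1, hm⟩ : Fin (m+2)) = Fin.last (m+1) := rfl
  have e1 : (⟨m, Nat.lt_of_succ_lt hm⟩ : Fin (m+2)) = (Fin.last m).castSucc := rfl
  rw [e0, e1, Fin.snoc_last, Fin.snoc_last, Fin.snoc_castSucc, Fin.snoc_castSucc,
    Fin.snoc_last, Fin.snoc_last]
  congr 1
  refine if_congr ?_ rfl rfl
  constructor
  · intro h
    funext t
    have ht : ((t.castSucc.castSucc : Fin (m+2)) : ℕ) = (t : ℕ) := rfl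
    have := h t.castSucc.castSucc (by rw [ht]; omega) (by rw [ht]; omega)
    simpa using this
  · intro h j hj1 hj2
    induction j using Fin.lastCases with
    | last => simp at hj2
    | cast t =>
      induction t using Fin.lastCases with
      | last => simp at hj1
      | cast s => simp [h]

lemma liftV_one_apply (L : Matrix (Fin N) (Fin N) A) (v w : Fin 1 → Fin N) :
    liftV 1 L 0 v w = L (v 0) (w 0) := by
  have h : (0:ℕ) < 1 := one_pos
  simp only [liftV, Matrix.of_apply, dif_pos h]
  have : ∀ j : Fin 1, (j : ℕ) ≠ 0 → v j = w j := by
    intro j hj; exact absurd (Fin.val_eq_zero j) hj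
  rw [if_pos this, mul_one]
  rfl

end aux3

section key
variable {N : ℕ} {A : Type} [Ring A]

lemma triple_entry {m : ℕ} (RA : Matrix (Fin N × Fin N) (Fin N × Fin N) A)
    (M : Matrix (Fin (m+1) → Fin N) (Fin (m+1) → Fin N) A)
    (i' kk : Fin m → Fin N) (ilast j d l : Fin N) :
    (lift2 (m+2) RA m * extM (m+1) M * lift2 (m+2) RA m)
      (Fin.snoc (Fin.snoc i' ilast) j) (Fin.snoc (Fin.snoc kk d) l)
    = ∑ c : Fin N, ∑ b : Fin N,
        (∑ a : Fin N, RA (ilast, j) (a, b) * M (Fin.snoc i' a) (Fin.snoc kk c))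
          * RA (c, b) (d, l) := by
  rw [Matrix.mul_apply]
  simp only [Matrix.mul_apply, sum_snoc, lift2_last_apply, extM_apply_snoc]
  simp only [mul_ite, ite_mul, mul_zero, zero_mul, mul_one, one_mul,
    Finset.sum_ite_eq, Finset.sum_ite_eq', Finset.mem_univ, if_true]
  simp only [Finset.sum_ite_irrel, Finset.sum_const_zero,
    Finset.sum_ite_eq, Finset.sum_ite_eq', Finset.mem_univ, if_true]

end key

section key2
variable {N : ℕ} {A : Type} [Ring A] [Algebra ℂ A]

lemma rearr1 (r s : ℂ) (u v w : A) :
    ((algebraMap ℂ A r * u) * algebraMap ℂ A s) * (v * w)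
      = (u * v) * (algebraMap ℂ A r * (algebraMap ℂ A s * w)) := by
  simp only [Algebra.algebraMap_eq_smul_one, smul_mul_assoc, mul_smul_comm, one_mul, mul_one,
    smul_smul, mul_assoc]

lemma rearr2 (r s : ℂ) (Y Z w : A) :
    (Y * Z) * (algebraMap ℂ A r * (algebraMap ℂ A s * w))
      = Y * (algebraMap ℂ A r * Z * algebraMap ℂ A s * w) := by
  simp only [Algebra.algebraMap_eq_smul_one, smul_mul_assoc, mul_smul_comm, one_mul, mul_one,
    smul_smul, mul_assoc]

lemma rearr3 (e : ℂ) (Y Z : A) :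
    Y * (algebraMap ℂ A e * Z) = algebraMap ℂ A e * (Y * Z) := by
  rw [← mul_assoc, ← Algebra.commutes, mul_assoc]

lemma sum_kk_in {β : Type*} [AddCommMonoid β] {I : Type} [Fintype I] {α : Type} [Fintype α]
    (F : I → α → α → α → α → β) :
    ∑ kk : I, ∑ d : α, ∑ c : α, ∑ b : α, ∑ a : α, F kk d c b a
      = ∑ d : α, ∑ c : α, ∑ b : α, ∑ a : α, ∑ kk : I, F kk d c b a := by
  rw [Finset.sum_comm]; refine Finset.sum_congr rfl fun d _ => ?_
  rw [Finset.sum_comm]; refine Finset.sum_congr rfl fun c _ => ?_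
  rw [Finset.sum_comm]; refine Finset.sum_congr rfl fun b _ => ?_
  exact Finset.sum_comm

lemma sum4_rev {β : Type*} [AddCommMonoid β] {α : Type} [Fintype α]
    (F : α → α → α → α → β) :
    ∑ d : α, ∑ c : α, ∑ b : α, ∑ a : α, F a b c d
      = ∑ a : α, ∑ b : α, ∑ c : α, ∑ d : α, F a b c d := by
  rw [Finset.sum_comm]
  refine (Finset.sum_congr rfl fun c _ => Finset.sum_comm).trans ?_
  rw [Finset.sum_comm]
  refine (Finset.sum_congr rfl fun b _ => Finset.sum_congr rfl fun c _ => Finset.sum_comm).trans ?_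
  refine (Finset.sum_congr rfl fun b _ => Finset.sum_comm).trans ?_
  rw [Finset.sum_comm]

end key2

lemma key {N : ℕ} {A : Type} [Ring A] [Algebra ℂ A] {m : ℕ}
    (R : Matrix (Fin N × Fin N) (Fin N × Fin N) ℂ)
    (x : Fin N → A) (L : Matrix (Fin N) (Fin N) A) (η : ℂ)
    (hOFP : ∀ i₁ i₂ l : Fin N,
      ∑ a : Fin N, ∑ b : Fin N, ∑ c : Fin N, ∑ d : Fin N,
          algebraMap ℂ A (R (i₁, i₂) (a, b)) * L a c
            * algebraMap ℂ A (R (c, b) (d, l)) * x d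
        = algebraMap ℂ A η * (x i₁ * L i₂ l))
    (M : Matrix (Fin (m+1) → Fin N) (Fin (m+1) → Fin N) A)
    (X : (Fin m → Fin N) → A) (Y : A) (i' : Fin m → Fin N)
    (hIH : ∀ a c : Fin N,
      ∑ kk : Fin m → Fin N, M (Fin.snoc i' a) (Fin.snoc kk c) * X kk = Y * L a c)
    (ilast j l : Fin N) :
    ∑ kk : Fin m → Fin N, ∑ d : Fin N,
        (lift2 (m+2) (R.map (algebraMap ℂ A)) m * extM (m+1) M
            * lift2 (m+2) (R.map (algebraMap ℂ A)) m)
          (Fin.snoc (Fin.snoc i' ilast) j) (Fin.snoc (Fin.snoc kk d) l) * (X kk * x d)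
      = algebraMap ℂ A η * (Y * (x ilast * L j l)) := by
  simp only [triple_entry, Matrix.map_apply]
  simp only [Finset.sum_mul]
  simp only [rearr1]
  rw [sum_kk_in]
  simp only [← Finset.sum_mul]
  simp only [hIH]
  simp only [rearr2]
  simp only [← Finset.mul_sum]
  rw [sum4_rev, hOFP ilast j l, rearr3]

lemma prod_snoc {N : ℕ} {A : Type} [Ring A] (x : Fin N → A) {m : ℕ}
    (g : Fin m → Fin N) (d : Fin N) :
    (List.ofFn fun t : Fin (m+1) => x ((Fin.snoc g d : Fin (m+1) → Fin N) t)).prod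
      = (List.ofFn fun t : Fin m => x (g t)).prod * x d := by
  rw [List.ofFn_succ']
  simp [Fin.snoc_castSucc, Fin.snoc_last]

lemma rearr4 {A : Type} [Ring A] [Algebra ℂ A] (e μ : ℂ) (P xi Lx : A) :
    algebraMap ℂ A e * ((algebraMap ℂ A μ * P) * (xi * Lx))
      = algebraMap ℂ A (μ * e) * ((P * xi) * Lx) := by
  simp only [_root_.map_mul, Algebra.algebraMap_eq_smul_one, smul_mul_assoc, mul_smul_comm,
    one_mul, smul_smul, mul_assoc]
  rw [mul_comm e μ]

lemma main_aux {N : ℕ} {A : Type} [Ring A] [Algebra ℂ A]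
    (R : Matrix (Fin N × Fin N) (Fin N × Fin N) ℂ)
    (x : Fin N → A) (L : Matrix (Fin N) (Fin N) A) (η : ℂ)
    (hOFP : ∀ i₁ i₂ l : Fin N,
      ∑ a : Fin N, ∑ b : Fin N, ∑ c : Fin N, ∑ d : Fin N,
          algebraMap ℂ A (R (i₁, i₂) (a, b)) * L a c
            * algebraMap ℂ A (R (c, b) (d, l)) * x d
        = algebraMap ℂ A η * (x i₁ * L i₂ l)) :
    ∀ m : ℕ, ∀ (i : Fin (m+1) → Fin N) (j l : Fin N),
      ∑ kk : Fin (m+1) → Fin N,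
          (RdownProd (m+2) (R.map (algebraMap ℂ A)) m
              * liftV (m+2) L 0
              * RupProd (m+2) (R.map (algebraMap ℂ A)) m)
            (Fin.snoc i j) (Fin.snoc kk l)
            * (List.ofFn fun t : Fin (m+1) => x (kk t)).prod
        = algebraMap ℂ A (η ^ (m+1))
            * ((List.ofFn fun t : Fin (m+1) => x (i t)).prod * L j l) := by
  intro m
  induction m with
  | zero =>
    intro i j l
    have hIH : ∀ a c : Fin N,
        ∑ kk : Fin 0 → Fin N,
          (liftV 1 L 0) (Fin.snoc (Fin.init i) a) (Fin.snoc kk c) * (1:A) = 1 * L a c := by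
      intro a c
      rw [Fintype.sum_unique]
      rw [liftV_one_apply, mul_one, one_mul]
      congr 1
    have hkey := key R x L η hOFP (liftV 1 L 0) (fun _ => (1:A)) 1 (Fin.init i) hIH
      (i (Fin.last 0)) j l
    have hV : liftV 2 L 0 = extM 1 (liftV 1 L 0) := (extM_liftV one_pos L).symm
    rw [← Fin.snoc_init_self i]
    show ∑ kk : Fin 1 → Fin N,
        (lift2 2 (R.map (algebraMap ℂ A)) 0 * liftV 2 L 0 * lift2 2 (R.map (algebraMap ℂ A)) 0)
          _ (Fin.snoc kk l) * _ = _
    rw [hV, sum_snoc]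
    simp only [prod_snoc]
    simpa [pow_one] using hkey
  | succ m ih =>
    intro i j l
    set RA := R.map (algebraMap ℂ A) with hRA
    have hBig : RdownProd (m+3) RA (m+1) * liftV (m+3) L 0 * RupProd (m+3) RA (m+1)
        = lift2 (m+3) RA (m+1)
            * extM (m+2) (RdownProd (m+2) RA m * liftV (m+2) L 0 * RupProd (m+2) RA m)
            * lift2 (m+3) RA (m+1) := by
      rw [extM_mul, extM_mul, extM_RdownProd (by omega), extM_RupProd (by omega),
        extM_liftV (by omega)]
      show (lift2 (m+3) RA (m+1) * RdownProd (m+3) RA m) * liftV (m+3) L 0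
          * (RupProd (m+3) RA m * lift2 (m+3) RA (m+1)) = _
      simp only [mul_assoc]
    have hIH : ∀ a c : Fin N,
        ∑ kk : Fin (m+1) → Fin N,
          (RdownProd (m+2) RA m * liftV (m+2) L 0 * RupProd (m+2) RA m)
            (Fin.snoc (Fin.init i) a) (Fin.snoc kk c)
            * (List.ofFn fun t : Fin (m+1) => x (kk t)).prod
          = (algebraMap ℂ A (η ^ (m+1))
              * (List.ofFn fun t : Fin (m+1) => x (Fin.init i t)).prod) * L a c := by
      intro a c
      rw [ih (Fin.init i) a c, mul_assoc]
    have hkey := key R x L η hOFP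
      (RdownProd (m+2) RA m * liftV (m+2) L 0 * RupProd (m+2) RA m)
      (fun kk : Fin (m+1) → Fin N => (List.ofFn fun t : Fin (m+1) => x (kk t)).prod)
      (algebraMap ℂ A (η ^ (m+1)) * (List.ofFn fun t : Fin (m+1) => x (Fin.init i t)).prod)
      (Fin.init i) hIH (i (Fin.last (m+1))) j l
    rw [← Fin.snoc_init_self i]
    show ∑ kk : Fin (m+2) → Fin N,
        (RdownProd (m+3) RA (m+1) * liftV (m+3) L 0 * RupProd (m+3) RA (m+1))
          _ (Fin.snoc kk l) * _ = _
    rw [hBig, sum_snoc]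
    simp only [prod_snoc]
    rw [hkey, rearr4, ← pow_succ]

/-- If the operator-function permutation relation `R₁L₁R₁x₁ = η·x₁L₂` holds
componentwise, then for every `p ≥ 1` the iterated relation holds:
`Σ_k [R_{p→1} L₁ R_{1→p}]_{(i,j)}^{(k,l)} x_{k₁}⋯x_{k_p} = η^p x_{i₁}⋯x_{i_p} L_j^l`. -/
theorem ofp_iterated (N : ℕ) (hN : 1 ≤ N)
    (R Rinv : Matrix (Fin N × Fin N) (Fin N × Fin N) ℂ)
    (hYB : up12 R * up23 R * up12 R = up23 R * up12 R * up23 R)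
    (hRinv : R * Rinv = 1 ∧ Rinv * R = 1)
    (A : Type) [Ring A] [Algebra ℂ A]
    (x : Fin N → A) (L : Matrix (Fin N) (Fin N) A) (η : ℂ) (hη : η ≠ 0)
    (hOFP : ∀ i₁ i₂ l : Fin N,
      ∑ a : Fin N, ∑ b : Fin N, ∑ c : Fin N, ∑ d : Fin N,
          algebraMap ℂ A (R (i₁, i₂) (a, b)) * L a c
            * algebraMap ℂ A (R (c, b) (d, l)) * x d
        = algebraMap ℂ A η * (x i₁ * L i₂ l)) :
    ∀ p : ℕ, 1 ≤ p → ∀ (i : Fin p → Fin N) (j l : Fin N),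
      ∑ kk : Fin p → Fin N,
          (RdownProd (p + 1) (R.map (algebraMap ℂ A)) (p - 1)
              * liftV (p + 1) L 0
              * RupProd (p + 1) (R.map (algebraMap ℂ A)) (p - 1))
            (Fin.snoc i j) (Fin.snoc kk l)
            * (List.ofFn fun t : Fin p => x (kk t)).prod
        = algebraMap ℂ A (η ^ p)
            * ((List.ofFn fun t : Fin p => x (i t)).prod * L j l) := by
  intro p hp i j l
  cases p with
  | zero => omega
  | succ m =>
    simpa only [Nat.add_sub_cancel] using main_aux R x L η hOFP m i j l
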